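/- Let S, T ⊆ {2, …, n} be subsets with ∑_{i ∈ S} w_i > 1 and ∑_{i ∈ T} w_i > 1, and suppose S ∩ T ≠ ∅. Then every flat of the graphic matroid M(w) containing E_S ∪ E_T contains E_{S ∪ T}; in other words, the smallest flat containing E_S ∪ E_T is E_{S ∪ T}. -/

import Mathlib

open Finset

/-- The reduced weight graph `G(w)`: vertices are `{2, …, n}` (as natural numbers),
and distinct `i, j ∈ {2, …, n}` are adjacent iff `w i + w j > 1`. -/
def redGraph (n : ℕ) (w : ℕ → ℚ) : SimpleGraph ℕ where
  Adj i j := i ≠ j ∧ (2 ≤ i ∧ i ≤ n) ∧ (2 ≤ j ∧ j ≤ n) ∧ 1 < w i + w j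
  symm := by
    constructor
    intro i j h
    exact ⟨h.1.symm, h.2.2.1, h.2.1, by rw [add_comm]; exact h.2.2.2⟩
  loopless := by constructor; intro i h; exact h.1 rfl

/-- `E_S`: the set of edges of `G(w)` with both endpoints in `S`. -/
def edgesIn (n : ℕ) (w : ℕ → ℚ) (S : Set ℕ) : Set (Sym2 ℕ) :=
  {e ∈ (redGraph n w).edgeSet | ∀ v ∈ e, v ∈ S}

/-- A set `F` of edges of `G(w)` is a *flat* of the graphic matroid `M(w)` if for
every edge `{u, v}` of `G(w)` not in `F`, the vertices `u` and `v` are not joined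
by a walk using only edges of `F`. -/
def IsFlat (n : ℕ) (w : ℕ → ℚ) (F : Set (Sym2 ℕ)) : Prop :=
  F ⊆ (redGraph n w).edgeSet ∧
    ∀ u v : ℕ, (redGraph n w).Adj u v → s(u, v) ∉ F →
      ¬ (SimpleGraph.fromEdgeSet F).Reachable u v

/-- The set of endpoints of edges in `F`. -/
def edgeSupport (F : Set (Sym2 ℕ)) : Set ℕ := {v | ∃ e ∈ F, v ∈ e}

/-- A flat `F` is *1-connected* if the subgraph of `G(w)` with edge set `F` and
vertex set the endpoints of edges of `F` is connected. -/
def OneConnected (F : Set (Sym2 ℕ)) : Prop :=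
  ((SimpleGraph.fromEdgeSet F).induce (edgeSupport F)).Connected


/-- If `S, T ⊆ {2, …, n}` have `∑_{i ∈ S} w i > 1`,
`∑_{i ∈ T} w i > 1` and `S ∩ T ≠ ∅`, then every flat of `M(w)` containing
`E_S ∪ E_T` contains `E_(S ∪ T)`; in other words, `E_(S ∪ T)` is the smallest flat
containing `E_S ∪ E_T`. -/
theorem closure_union_edgesIn (n m : ℕ) (ε : ℚ) (hm : 2 ≤ m) (hmn : m < n) (hn : 4 ≤ n)
    (hε0 : 0 < ε) (hε1 : ε < 1 / ((n : ℚ) - m))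
    (w : ℕ → ℚ) (hw : ∀ i, 1 ≤ i → i ≤ n → w i = if i ≤ m then 1 else ε)
    (S T : Finset ℕ) (hS : S ⊆ Finset.Icc 2 n) (hT : T ⊆ Finset.Icc 2 n)
    (hsS : 1 < ∑ i ∈ S, w i) (hsT : 1 < ∑ i ∈ T, w i) (hmeet : (S ∩ T).Nonempty) :
    IsFlat n w (edgesIn n w (↑(S ∪ T) : Set ℕ)) ∧
    edgesIn n w (↑S : Set ℕ) ∪ edgesIn n w (↑T : Set ℕ) ⊆ edgesIn n w (↑(S ∪ T) : Set ℕ) ∧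
    (∀ F : Set (Sym2 ℕ), IsFlat n w F →
      edgesIn n w (↑S : Set ℕ) ∪ edgesIn n w (↑T : Set ℕ) ⊆ F →
      edgesIn n w (↑(S ∪ T) : Set ℕ) ⊆ F) := by
  classical
  have hnm : (0:ℚ) < (n:ℚ) - m := by
    have : (m:ℚ) < n := by exact_mod_cast hmn
    linarith
  have hwpos : ∀ i, 2 ≤ i → i ≤ n → 0 < w i := by
    intro i h2 hn'
    rw [hw i (by omega) hn']
    split
    · norm_num
    · exact hε0
  have hwheavy : ∀ i, 2 ≤ i → i ≤ m → w i = 1 := by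
    intro i h2 hm'
    rw [hw i (by omega) (by omega)]
    simp [hm']
  -- every heavy-weight set contains a heavy vertex
  have heavy : ∀ (U : Finset ℕ), U ⊆ Finset.Icc 2 n → 1 < ∑ i ∈ U, w i →
      ∃ h ∈ U, h ≤ m := by
    intro U hU hsum
    by_contra hc
    push_neg at hc
    have hwε : ∀ i ∈ U, w i = ε := by
      intro i hi
      have hb := Finset.mem_Icc.mp (hU hi)
      rw [hw i (by omega) hb.2]
      simp [Nat.not_le.mpr (hc i hi)]
    have hsum' : ∑ i ∈ U, w i = (U.card : ℚ) * ε := by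
      rw [Finset.sum_congr rfl hwε, Finset.sum_const, nsmul_eq_mul]
    have hcard : U.card ≤ n - m := by
      have hsub : U ⊆ Finset.Icc (m+1) n := by
        intro i hi
        have hb := Finset.mem_Icc.mp (hU hi)
        exact Finset.mem_Icc.mpr ⟨hc i hi, hb.2⟩
      calc U.card ≤ (Finset.Icc (m+1) n).card := Finset.card_le_card hsub
        _ = n - m := by rw [Nat.card_Icc]; omega
    have hcardQ : (U.card : ℚ) ≤ (n:ℚ) - m := by
      have h1 : ((n - m : ℕ):ℚ) = (n:ℚ) - m := by
        rw [Nat.cast_sub hmn.le]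
      have := (Nat.cast_le (α := ℚ)).mpr hcard
      linarith
    have h2 : (U.card : ℚ) * ε ≤ ((n:ℚ) - m) * ε :=
      mul_le_mul_of_nonneg_right hcardQ hε0.le
    have h3 : ((n:ℚ) - m) * ε < ((n:ℚ) - m) * (1 / ((n:ℚ) - m)) :=
      mul_lt_mul_of_pos_left hε1 hnm
    have h4 : ((n:ℚ) - m) * (1 / ((n:ℚ) - m)) = 1 := by
      field_simp
    linarith
  -- the hub edge
  have hadjE : ∀ (U : Finset ℕ), U ⊆ Finset.Icc 2 n → ∀ h ∈ U, h ≤ m → ∀ u ∈ U, u ≠ h →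
      s(u, h) ∈ edgesIn n w (↑U : Set ℕ) := by
    intro U hU h hh hhm u hu hne
    have hbu := Finset.mem_Icc.mp (hU hu)
    have hbh := Finset.mem_Icc.mp (hU hh)
    constructor
    · rw [SimpleGraph.mem_edgeSet]
      refine ⟨hne, ⟨hbu.1, hbu.2⟩, ⟨hbh.1, hbh.2⟩, ?_⟩
      rw [hwheavy h hbh.1 hhm]
      have := hwpos u hbu.1 hbu.2
      linarith
    · intro x hx
      rcases Sym2.mem_iff.mp hx with rfl | rfl
      · exact Finset.mem_coe.mpr hu
      · exact Finset.mem_coe.mpr hh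
  -- everything in U reaches the hub, in any graph containing E_U
  have hreach : ∀ (U : Finset ℕ) (F : Set (Sym2 ℕ)),
      U ⊆ Finset.Icc 2 n → edgesIn n w (↑U : Set ℕ) ⊆ F →
      ∀ h ∈ U, h ≤ m → ∀ u ∈ U, (SimpleGraph.fromEdgeSet F).Reachable u h := by
    intro U F hU hUF h hh hhm u hu
    by_cases hne : u = h
    · subst hne; exact SimpleGraph.Reachable.refl u
    · refine SimpleGraph.Adj.reachable ?_
      rw [SimpleGraph.fromEdgeSet_adj]
      exact ⟨hUF (hadjE U hU h hh hhm u hu hne), hne⟩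
  -- vertices outside A are isolated in fromEdgeSet (edgesIn n w A)
  have hiso : ∀ (A : Set ℕ) (u v : ℕ), u ∉ A →
      (SimpleGraph.fromEdgeSet (edgesIn n w A)).Reachable u v → u = v := by
    intro A u v hu hr
    obtain ⟨p⟩ := hr
    cases p with
    | nil => rfl
    | cons ha _ =>
      rw [SimpleGraph.fromEdgeSet_adj] at ha
      exact absurd (ha.1.2 u (Sym2.mem_mk_left _ _)) hu
  obtain ⟨x, hx⟩ := hmeet
  have hxS : x ∈ S := (Finset.mem_inter.mp hx).1
  have hxT : x ∈ T := (Finset.mem_inter.mp hx).2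
  obtain ⟨hS2, hhS, hhSm⟩ := heavy S hS hsS
  obtain ⟨hT2, hhT, hhTm⟩ := heavy T hT hsT
  have hST : S ∪ T ⊆ Finset.Icc 2 n := Finset.union_subset hS hT
  have hmono : edgesIn n w (↑S : Set ℕ) ∪ edgesIn n w (↑T : Set ℕ) ⊆
      edgesIn n w (↑(S ∪ T) : Set ℕ) := by
    intro e he
    rcases he with he | he
    · exact ⟨he.1, fun v hv => by
        have := he.2 v hv
        simp only [Finset.coe_union, Set.mem_union]
        exact Or.inl this⟩
    · exact ⟨he.1, fun v hv => by
        have := he.2 v hv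
        simp only [Finset.coe_union, Set.mem_union]
        exact Or.inr this⟩
  refine ⟨⟨fun e he => he.1, ?_⟩, hmono, ?_⟩
  · -- flatness of E_{S∪T}
    intro u v huv hnot hr
    by_cases hu : u ∈ (↑(S ∪ T) : Set ℕ)
    · by_cases hv : v ∈ (↑(S ∪ T) : Set ℕ)
      · apply hnot
        refine ⟨(SimpleGraph.mem_edgeSet _).mpr huv, ?_⟩
        intro y hy
        rcases Sym2.mem_iff.mp hy with rfl | rfl
        · exact hu
        · exact hv
      · exact huv.ne (hiso _ v u hv hr.symm).symm
    · exact huv.ne (hiso _ u v hu hr)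
  · -- minimality
    intro F hF hsub e he
    revert he
    induction e using Sym2.ind with
    | _ u v =>
      intro he
      by_contra hne
      have hadj : (redGraph n w).Adj u v := (SimpleGraph.mem_edgeSet _).mp he.1
      refine hF.2 u v hadj hne ?_
      have hSsub : edgesIn n w (↑S : Set ℕ) ⊆ F :=
        fun e' he' => hsub (Or.inl he')
      have hTsub : edgesIn n w (↑T : Set ℕ) ⊆ F :=
        fun e' he' => hsub (Or.inr he')
      have key : ∀ a ∈ S ∪ T, (SimpleGraph.fromEdgeSet F).Reachable a hS2 := by
        intro a ha
        rcases Finset.mem_union.mp ha with ha | ha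
        · exact hreach S F hS hSsub hS2 hhS hhSm a ha
        · have h1 := hreach T F hT hTsub hT2 hhT hhTm a ha
          have h2 := hreach T F hT hTsub hT2 hhT hhTm x hxT
          have h3 := hreach S F hS hSsub hS2 hhS hhSm x hxS
          exact (h1.trans h2.symm).trans h3
      have hu : u ∈ S ∪ T := by
        have := he.2 u (Sym2.mem_mk_left _ _)
        simpa using this
      have hv : v ∈ S ∪ T := by
        have := he.2 v (Sym2.mem_mk_right _ _)
        simpa using this
      exact (key u hu).trans (key v hv).symm
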